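/- Let G be a 3-regular finite simple graph on n ≥ 3 vertices and let C_n be the cycle graph on n vertices. Then δ_edit(G, C_n) ≤ n/2 if and only if G has a Hamiltonian cycle. -/

import Mathlib

open SimpleGraph

section MismatchDefs

variable {V W : Type*}

/-- The mismatch graph `G^π − H`: the symmetric difference of the image of `G` under the
bijection `π` with `H`, as a graph on `V(H)`. Its edges are the positive edges
(edges of `G^π` not in `H`) together with the negative edges (edges of `H` not in `G^π`). -/
def mismatchGraph (G : SimpleGraph V) (H : SimpleGraph W) (π : V ≃ W) : SimpleGraph W :=
  symmDiff (G.map π.toEmbedding) H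

/-- The degree of a vertex in the mismatch graph `G^π − H`. -/
noncomputable def mismatchDeg (G : SimpleGraph V) (H : SimpleGraph W) (π : V ≃ W) (x : W) : ℕ :=
  ((mismatchGraph G H π).neighborSet x).ncard

/-- The number of positive edges of `G^π − H` incident to `x`. -/
noncomputable def posDeg (G : SimpleGraph V) (H : SimpleGraph W) (π : V ≃ W) (x : W) : ℕ :=
  ((G.map π.toEmbedding).neighborSet x \ H.neighborSet x).ncard

/-- The number of negative edges of `G^π − H` incident to `x`. -/
noncomputable def negDeg (G : SimpleGraph V) (H : SimpleGraph W) (π : V ≃ W) (x : W) : ℕ :=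
  (H.neighborSet x \ (G.map π.toEmbedding).neighborSet x).ncard

/-- The maximum mismatch count `MMC(π)`: the maximum degree of the mismatch graph `G^π − H`. -/
noncomputable def MMC [Fintype W] (G : SimpleGraph V) (H : SimpleGraph W) (π : V ≃ W) : ℕ :=
  Finset.univ.sup (mismatchDeg G H π)

/-- The edit mismatch norm `μ_edit(G^π, H)`: the number of edges of the mismatch graph. -/
noncomputable def muEdit (G : SimpleGraph V) (H : SimpleGraph W) (π : V ≃ W) : ℕ :=
  (mismatchGraph G H π).edgeSet.ncard

/-- The edit distance `δ_edit(G, H)`: the minimum of `μ_edit(G^π, H)` over all bijections. -/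
noncomputable def deltaEdit (G : SimpleGraph V) (H : SimpleGraph W) : ℕ :=
  ⨅ π : V ≃ W, muEdit G H π

open Classical in
/-- The signed adjacency matrix of the mismatch graph `G^π − H`:
`+1` on positive edges, `−1` on negative edges, `0` otherwise. -/
noncomputable def signedAdj (G : SimpleGraph V) (H : SimpleGraph W) (π : V ≃ W) :
    Matrix W W ℝ := fun x y =>
  if (G.map π.toEmbedding).Adj x y ∧ ¬ H.Adj x y then 1
  else if H.Adj x y ∧ ¬ (G.map π.toEmbedding).Adj x y then -1 else 0

/-- The `ℓ_p` norm of a vector over a finite index type. -/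
noncomputable def lpNorm [Fintype W] (p : ℝ) (x : W → ℝ) : ℝ :=
  (∑ i, |x i| ^ p) ^ p⁻¹

/-- The `ℓ_p`-operator norm of a matrix: `sup_{x ≠ 0} ‖Mx‖_p / ‖x‖_p`. -/
noncomputable def lpOpNorm [Fintype W] (p : ℝ) (M : Matrix W W ℝ) : ℝ :=
  ⨆ x : {x : W → ℝ // x ≠ 0}, lpNorm p (M.mulVec x.1) / lpNorm p x.1

end MismatchDefs

namespace StatementTwoAux

open Fin.NatCast Fin.CommRing

lemma cycleGraph_adj_succ {n : ℕ} [NeZero n] (hn : 3 ≤ n) (m : ℕ) :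
    (cycleGraph n).Adj (m : Fin n) ((m + 1 : ℕ) : Fin n) := by
  rw [SimpleGraph.cycleGraph_adj']
  right
  have h : ((m + 1 : ℕ) : Fin n) - (m : Fin n) = 1 := by push_cast; ring
  rw [h, Fin.val_one', Nat.mod_eq_of_lt (by omega)]

lemma cycleGraph_isHamiltonian {n : ℕ} (hn : 3 ≤ n) : (cycleGraph n).IsHamiltonian := by
  have : NeZero n := ⟨by omega⟩
  have hone : (1 : Fin n).val = 1 := by
    rw [Fin.val_one']; exact Nat.mod_eq_of_lt (by omega)
  have key : ∀ t m : ℕ, m + t + 1 = n → 1 ≤ m →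
      ∃ p : (cycleGraph n).Walk (m : Fin n) 0,
        (∀ x : Fin n, x ∈ p.support ↔ (x = 0 ∨ m ≤ x.val)) ∧
        p.support.Nodup ∧ s((0 : Fin n), 1) ∉ p.edges := by
    intro t
    induction t with
    | zero =>
      intro m hm hm1
      have hmlt : m < n := by omega
      have hv : ((m : Fin n)).val = m := Fin.val_cast_of_lt hmlt
      have h1 : (m : Fin n) + 1 = 0 := by
        have : ((m + 1 : ℕ) : Fin n) = ((n : ℕ) : Fin n) := by rw [show m + 1 = n by omega]
        rw [Fin.natCast_self] at this
        rw [← this]; push_cast; ring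
      have hsub : (0 : Fin n) - (m : Fin n) = 1 := by
        rw [← h1]; ring
      have hadj : (cycleGraph n).Adj (m : Fin n) 0 := by
        rw [SimpleGraph.cycleGraph_adj']
        right
        rw [hsub, hone]
      refine ⟨Walk.cons hadj Walk.nil, ?_, ?_, ?_⟩
      · intro x
        simp only [Walk.support_cons, Walk.support_nil, List.mem_cons, List.mem_singleton,
          List.not_mem_nil, or_false]
        constructor
        · rintro (rfl | rfl)
          · right; omega
          · left; rfl
        · rintro (rfl | hx)
          · right; rfl
          · left
            have := x.isLt
            have : x.val = m := by omega
            apply Fin.ext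
            rw [hv, this]
      · have hne : (m : Fin n) ≠ 0 := by
          intro h
          have : ((m : Fin n)).val = (0 : Fin n).val := by rw [h]
          rw [hv] at this
          simp at this
          omega
        simp [hne]
      · simp only [Walk.edges_cons, Walk.edges_nil, List.mem_singleton, List.not_mem_nil,
          or_false, List.mem_cons]
        intro h
        rw [Sym2.eq_iff] at h
        rcases h with ⟨h1', h2'⟩ | ⟨h1', h2'⟩
        · have : (1 : Fin n).val = (0:Fin n).val := by rw [h2']
          rw [hone] at this
          simp at this
        · have : (1 : Fin n).val = ((m : Fin n)).val := by rw [h2']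
          rw [hone, hv] at this
          omega
    | succ t ih =>
      intro m hm hm1
      obtain ⟨p, hmem, hnd, he⟩ := ih (m + 1) (by omega) (by omega)
      have hmlt : m < n := by omega
      have hm1lt : m + 1 < n := by omega
      have hv : ((m : Fin n)).val = m := Fin.val_cast_of_lt hmlt
      have hv1 : (((m+1 : ℕ) : Fin n)).val = m + 1 := Fin.val_cast_of_lt hm1lt
      refine ⟨Walk.cons (cycleGraph_adj_succ hn m) p, ?_, ?_, ?_⟩
      · intro x
        simp only [Walk.support_cons, List.mem_cons]
        rw [hmem]
        constructor
        · rintro (rfl | h | h)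
          · right; omega
          · left; exact h
          · right; omega
        · rintro (rfl | h)
          · right; left; rfl
          · rcases Nat.eq_or_lt_of_le h with h' | h'
            · left
              apply Fin.ext
              rw [hv, ← h']
            · right; right; omega
      · simp only [Walk.support_cons, List.nodup_cons]
        refine ⟨?_, hnd⟩
        rw [hmem]
        push_neg
        constructor
        · intro h
          have : ((m : Fin n)).val = (0 : Fin n).val := by rw [h]
          rw [hv] at this
          simp at this
          omega
        · rw [hv]; omega
      · simp only [Walk.edges_cons, List.mem_cons]
        push_neg
        refine ⟨?_, he⟩
        intro h
        rw [Sym2.eq_iff] at h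
        rcases h with ⟨h1', h2'⟩ | ⟨h1', h2'⟩
        · have : (0 : Fin n).val = ((m : Fin n)).val := by rw [h1']
          rw [hv] at this
          simp at this
          omega
        · have : (0 : Fin n).val = (((m+1:ℕ) : Fin n)).val := by rw [h1']
          rw [hv1] at this
          simp at this
  obtain ⟨p, hmem, hnd, he⟩ := key (n - 2) 1 (by omega) le_rfl
  have hcast : ((1 : ℕ) : Fin n) = (1 : Fin n) := Nat.cast_one
  set p' : (cycleGraph n).Walk (1 : Fin n) 0 := p.copy hcast rfl with hp'
  have hsup : p'.support = p.support := Walk.support_copy _ _ _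
  have hed : p'.edges = p.edges := Walk.edges_copy _ _ _
  have hadj01 : (cycleGraph n).Adj (0 : Fin n) (1 : Fin n) := by
    rw [SimpleGraph.cycleGraph_adj']
    right
    rw [sub_zero, hone]
  intro _
  refine ⟨0, Walk.cons hadj01 p', ?_⟩
  rw [SimpleGraph.Walk.isHamiltonianCycle_iff_isCycle_and_support_count_tail_eq_one]
  constructor
  · rw [Walk.cons_isCycle_iff]
    refine ⟨Walk.IsPath.mk' (by rw [hsup]; exact hnd), by rw [hed]; exact he⟩
  · intro x
    simp only [Walk.support_cons, List.tail_cons]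
    rw [hsup]
    apply List.count_eq_one_of_mem hnd
    rw [hmem]
    rcases eq_or_ne x 0 with rfl | hx
    · left; rfl
    · right
      have : x.val ≠ 0 := by
        intro h
        exact hx (Fin.ext (by simp [h]))
      omega


lemma exists_equiv_of_ham {V : Type*} [Fintype V] [DecidableEq V] {n : ℕ} (hn : 3 ≤ n)
    (G : SimpleGraph V) (hcard : Fintype.card V = n) (hG : G.IsHamiltonian) :
    ∃ π : V ≃ Fin n, cycleGraph n ≤ G.map π.toEmbedding := by
  have : NeZero n := ⟨by omega⟩
  have hone : (1 : Fin n).val = 1 := by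
    rw [Fin.val_one']; exact Nat.mod_eq_of_lt (by omega)
  obtain ⟨a, p, hp⟩ := hG (by omega)
  set l := p.support.tail with hl
  have hnd : l.Nodup := hp.isCycle.2
  have hmem : ∀ x, x ∈ l := by
    intro x
    have h1 := (SimpleGraph.Walk.isHamiltonianCycle_iff_isCycle_and_support_count_tail_eq_one.mp
      hp).2 x
    exact List.count_pos_iff.mp (by rw [h1]; norm_num)
  have hlen : l.length = n := by
    have h1 : p.support.length = p.length + 1 := SimpleGraph.Walk.length_support p
    have h2 : p.length = Fintype.card V := hp.length_eq
    have h3 : l.length = p.support.length - 1 := by rw [hl, List.length_tail]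
    omega
  have hchain : List.Chain G.Adj a l := by
    have h := SimpleGraph.Walk.isChain_adj_support p
    rw [SimpleGraph.Walk.support_eq_cons] at h
    exact h
  have hchain' : List.Chain' G.Adj l :=
    (List.isChain_cons.mp (show List.Chain' G.Adj (a :: l) from hchain)).2
  have hlast : ∀ h : l ≠ [], l.getLast h = a := by
    intro h
    have h1 : p.support.tail.getLast h = p.support.getLast (by simp) :=
      List.getLast_tail _
    rw [show l.getLast h = p.support.tail.getLast h from rfl, h1,
      SimpleGraph.Walk.getLast_support]
  -- consecutive adjacency with wraparound
  have hadjget : ∀ (i : ℕ) (hi : i < n),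
      G.Adj (l.get ⟨i, by omega⟩) (l.get ⟨(i + 1) % n, by exact hlen ▸ Nat.mod_lt _ (by omega)⟩) := by
    intro i hi
    rcases Nat.lt_or_ge (i + 1) n with h' | h'
    · have hget : l.get ⟨(i + 1) % n, by exact hlen ▸ Nat.mod_lt _ (by omega)⟩ =
          l.get ⟨i + 1, by omega⟩ := by
        congr 1
        exact Fin.ext (Nat.mod_eq_of_lt h')
      rw [hget]
      exact List.isChain_iff_getElem.mp hchain' i (by omega)
    · have hieq : i = n - 1 := by omega
      have hmod : (i + 1) % n = 0 := by
        rw [show i + 1 = n by omega, Nat.mod_self]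
      have hget0 : l.get ⟨(i + 1) % n, by exact hlen ▸ Nat.mod_lt _ (by omega)⟩ =
          l.get ⟨0, by omega⟩ := by
        congr 1
        exact Fin.ext hmod
      rw [hget0]
      have hln : l ≠ [] := by intro h; rw [h] at hlen; simp at hlen; omega
      have hgl : l.get ⟨i, by omega⟩ = a := by
        refine Eq.trans ?_ (hlast hln)
        rw [List.getLast_eq_getElem]
        simp only [List.get_eq_getElem]
        congr 1
        omega
      rw [hgl]
      exact List.isChain_iff_getElem.mp (show List.IsChain G.Adj (a :: l) from hchain) 0 (by simp only [List.length_cons]; omega)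
  set e : Fin n ≃ V := (finCongr hlen.symm).trans (hnd.getEquivOfForallMemList l hmem) with he
  have he_apply : ∀ i : Fin n, e i = l.get (Fin.cast hlen.symm i) := fun i => rfl
  refine ⟨e.symm, ?_⟩
  have hadj : ∀ x : Fin n, G.Adj (e x) (e (x + 1)) := by
    intro x
    have h1 : (x + 1).val = (x.val + 1) % n := by
      rw [Fin.add_def, hone]
    rw [he_apply, he_apply]
    have := hadjget x.val x.isLt
    convert this using 2
    all_goals simp [Fin.cast, h1]
  intro x y hxy
  rw [SimpleGraph.cycleGraph_adj'] at hxy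
  rw [SimpleGraph.map_adj]
  rcases hxy with h | h
  · have hxy1 : x = y + 1 := by
      have h2 : x - y = 1 := Fin.ext (by rw [hone]; exact h)
      rw [sub_eq_iff_eq_add] at h2
      rw [h2, add_comm]
    exact ⟨e x, e y, by rw [hxy1]; exact (hadj y).symm, by simp, by simp⟩
  · have hxy1 : y = x + 1 := by
      have h2 : y - x = 1 := Fin.ext (by rw [hone]; exact h)
      rw [sub_eq_iff_eq_add] at h2
      rw [h2, add_comm]
    exact ⟨e x, e y, by rw [hxy1]; exact hadj x, by simp, by simp⟩


lemma hB_count {n : ℕ} (hn : 3 ≤ n) : (cycleGraph n).edgeSet.ncard = n := by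
  obtain ⟨m, rfl⟩ : ∃ m, n = m + 3 := ⟨n - 3, by omega⟩
  have hdeg := SimpleGraph.sum_degrees_eq_twice_card_edges (cycleGraph (m + 3))
  have hdeg2 : ∀ v : Fin (m + 3), (cycleGraph (m + 3)).degree v = 2 :=
    fun v => SimpleGraph.cycleGraph_degree_three_le
  rw [Finset.sum_congr rfl (fun v _ => hdeg2 v), Finset.sum_const, Finset.card_univ,
    Fintype.card_fin, smul_eq_mul] at hdeg
  rw [← SimpleGraph.coe_edgeFinset, Set.ncard_coe_finset]
  omega

lemma hA_count {V : Type*} [Fintype V] [DecidableEq V] {n : ℕ}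
    (G : SimpleGraph V) [DecidableRel G.Adj] (hcard : Fintype.card V = n)
    (hreg : G.IsRegularOfDegree 3) (π : V ≃ Fin n) :
    2 * (G.map π.toEmbedding).edgeSet.ncard = 3 * n := by
  have h1 : (G.map π.toEmbedding).edgeSet.ncard = G.edgeSet.ncard := by
    rw [← Nat.card_coe_set_eq, ← Nat.card_coe_set_eq]
    exact (Nat.card_congr (SimpleGraph.Iso.map π G).mapEdgeSet).symm
  have hdeg := SimpleGraph.sum_degrees_eq_twice_card_edges G
  rw [Finset.sum_congr rfl (fun v _ => hreg v), Finset.sum_const, Finset.card_univ, hcard, smul_eq_mul] at hdeg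
  rw [h1, ← SimpleGraph.coe_edgeFinset, Set.ncard_coe_finset]
  omega

lemma muEdit_key {V : Type*} [Fintype V] [DecidableEq V] {n : ℕ}
    (G : SimpleGraph V) (π : V ≃ Fin n) :
    muEdit G (cycleGraph n) π
      + 2 * ((G.map π.toEmbedding).edgeSet ∩ (cycleGraph n).edgeSet).ncard
      = (G.map π.toEmbedding).edgeSet.ncard + (cycleGraph n).edgeSet.ncard := by
  set A := (G.map π.toEmbedding).edgeSet with hA
  set B := (cycleGraph n).edgeSet with hBs
  have hsd : (mismatchGraph G (cycleGraph n) π).edgeSet = (A \ B) ∪ (B \ A) := by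
    rw [mismatchGraph, symmDiff_def, SimpleGraph.edgeSet_sup, SimpleGraph.edgeSet_sdiff,
      SimpleGraph.edgeSet_sdiff]
  have hunion : muEdit G (cycleGraph n) π = (A \ B).ncard + (B \ A).ncard := by
    rw [muEdit, hsd]
    exact Set.ncard_union_eq (disjoint_sdiff_sdiff) (Set.toFinite _) (Set.toFinite _)
  have h1 : (A ∩ B).ncard + (A \ B).ncard = A.ncard :=
    Set.ncard_inter_add_ncard_diff_eq_ncard A B (Set.toFinite _)
  have h2 : (B ∩ A).ncard + (B \ A).ncard = B.ncard :=
    Set.ncard_inter_add_ncard_diff_eq_ncard B A (Set.toFinite _)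
  rw [Set.inter_comm] at h2
  omega

end StatementTwoAux

/-- For a 3-regular graph `G` on `n ≥ 3` vertices,
`δ_edit(G, C_n) ≤ n/2` if and only if `G` has a Hamiltonian cycle. -/

theorem statement_2 {V : Type*} [Fintype V] [DecidableEq V] (n : ℕ) (hn : 3 ≤ n)
    (G : SimpleGraph V) [DecidableRel G.Adj] (hcard : Fintype.card V = n)
    (hreg : G.IsRegularOfDegree 3) :
    2 * deltaEdit G (SimpleGraph.cycleGraph n) ≤ n ↔ G.IsHamiltonian := by
  classical
  have hB := StatementTwoAux.hB_count hn
  have hA2 := fun π : V ≃ Fin n => StatementTwoAux.hA_count G hcard hreg π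
  have hkey := fun π : V ≃ Fin n => StatementTwoAux.muEdit_key G π
  constructor
  · intro hle
    have hne : Nonempty (V ≃ Fin n) := ⟨Fintype.equivFinOfCardEq hcard⟩
    have hmem : deltaEdit G (SimpleGraph.cycleGraph n) ∈
        Set.range (fun π : V ≃ Fin n => muEdit G (SimpleGraph.cycleGraph n) π) := by
      rw [deltaEdit]
      exact Nat.sInf_mem (Set.range_nonempty _)
    obtain ⟨π, hπ⟩ := hmem
    simp only at hπ
    rw [← hπ] at hle
    have hc : (SimpleGraph.cycleGraph n).edgeSet.ncard ≤
        ((G.map π.toEmbedding).edgeSet ∩ (SimpleGraph.cycleGraph n).edgeSet).ncard := by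
      have h3 := hkey π
      have h4 := hA2 π
      omega
    have heq := Set.eq_of_subset_of_ncard_le (Set.inter_subset_right) hc (Set.toFinite _)
    have hsub : (SimpleGraph.cycleGraph n).edgeSet ⊆ (G.map π.toEmbedding).edgeSet := by
      rw [← heq]; exact Set.inter_subset_left
    have hle' : SimpleGraph.cycleGraph n ≤ G.map π.toEmbedding :=
      SimpleGraph.edgeSet_subset_edgeSet.mp hsub
    have hf : ∀ {x y}, (SimpleGraph.cycleGraph n).Adj x y → G.Adj (π.symm x) (π.symm y) := by
      intro x y hxy
      obtain ⟨u, v, huv, hu, hv⟩ := (SimpleGraph.map_adj _ _ _ _).mp (hle' hxy)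
      have hu' : π.symm x = u := by rw [← hu]; simp
      have hv' : π.symm y = v := by rw [← hv]; simp
      rw [hu', hv']
      exact huv
    set f : (SimpleGraph.cycleGraph n) →g G := ⟨π.symm, hf⟩ with hfdef
    have hfb : Function.Bijective f := π.symm.bijective
    intro _
    obtain ⟨a, q, hq⟩ := StatementTwoAux.cycleGraph_isHamiltonian hn
      (by rw [Fintype.card_fin]; omega)
    exact ⟨f a, q.map f, hq.map (f := f) hfb⟩
  · intro hham
    obtain ⟨π, hπle⟩ := StatementTwoAux.exists_equiv_of_ham hn G hcard hham
    have hsub := SimpleGraph.edgeSet_mono hπle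
    have hBA : (G.map π.toEmbedding).edgeSet ∩ (SimpleGraph.cycleGraph n).edgeSet
        = (SimpleGraph.cycleGraph n).edgeSet :=
      Set.inter_eq_self_of_subset_right hsub
    have h1 := hkey π
    rw [hBA] at h1
    have h2 := hA2 π
    have hd : deltaEdit G (SimpleGraph.cycleGraph n) ≤ muEdit G (SimpleGraph.cycleGraph n) π :=
      ciInf_le (OrderBot.bddBelow _) π
    omega
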